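/- arXiv:1703.02348 — 2 statements merged into one kernel-verified Lean document; each statement's English description precedes it below -/
import Mathlib

section
/- Let D ⊆ ℝⁿ be a bounded convex domain, V ∈ C²(D;ℝ), x* ∈ D, m₁ ≥ 1, and suppose γ₁‖x-x*‖^{2m₁} ≤ V(x) ≤ γ₂‖x-x*‖^{2m₁}, κ₁V(x)^{2-1/m₁} ≤ ‖∇V(x)‖² ≤ κ₂V(x)^{2-1/m₁}, and ‖∂²V(x)/∂x²‖ ≤ μ·V(x)^{1-1/m₁} for all x ∈ D. Then the function v(θ) = V(x⁰ + θy)^{1/m₁} is C¹ on [0,1] for any x⁰ ∈ D, y ∈ ℝⁿ with x⁰ + θy ∈ D for all θ ∈ [0,1], and its derivative w = v' is Lipschitz with constant L̄ = ((m₁-1)κ₂ + μm₁)/m₁² · ‖y‖². -/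
open Set Real

set_option maxHeartbeats 2000000 in
/-- Under the growth assumptions on `V`, `∇V`, and the Hessian of `V`
on a bounded convex domain `D`, for any `x0 ∈ D` and `y` with the segment
`x0 + θ y`, `θ ∈ [0,1]`, contained in `D`, the function `v θ = V(x0 + θ y)^{1/m₁}`
is `C¹` on `[0,1]` and its derivative is Lipschitz with constant
`L̄ = ((m₁-1)κ₂ + μ m₁)/m₁² · ‖y‖²`. -/
theorem stmt11 {n : ℕ} (D : Set (EuclideanSpace ℝ (Fin n)))
    (hDopen : IsOpen D) (hDconv : Convex ℝ D) (hDbdd : Bornology.IsBounded D)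
    (V : EuclideanSpace ℝ (Fin n) → ℝ) (hV : ContDiffOn ℝ 2 V D)
    (xstar : EuclideanSpace ℝ (Fin n)) (hxstar : xstar ∈ D)
    (m₁ γ₁ γ₂ κ₁ κ₂ μ : ℝ) (hm₁ : 1 ≤ m₁)
    (hγ₁ : 0 < γ₁) (hγ₂ : 0 < γ₂) (hκ₁ : 0 < κ₁) (hκ₂ : 0 < κ₂) (hμ : 0 < μ)
    (hVlow : ∀ x ∈ D, γ₁ * ‖x - xstar‖ ^ (2 * m₁) ≤ V x)
    (hVup : ∀ x ∈ D, V x ≤ γ₂ * ‖x - xstar‖ ^ (2 * m₁))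
    (hgradlow : ∀ x ∈ D, κ₁ * V x ^ (2 - 1 / m₁) ≤ ‖gradient V x‖ ^ 2)
    (hgradup : ∀ x ∈ D, ‖gradient V x‖ ^ 2 ≤ κ₂ * V x ^ (2 - 1 / m₁))
    (hHess : ∀ x ∈ D, ‖iteratedFDerivWithin ℝ 2 V D x‖ ≤ μ * V x ^ (1 - 1 / m₁))
    (x0 : EuclideanSpace ℝ (Fin n)) (hx0 : x0 ∈ D)
    (y : EuclideanSpace ℝ (Fin n))
    (hseg : ∀ θ ∈ Icc (0:ℝ) 1, x0 + θ • y ∈ D) :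
    ∃ w : ℝ → ℝ,
      (∀ θ ∈ Icc (0:ℝ) 1,
        HasDerivAt (fun θ : ℝ => V (x0 + θ • y) ^ (1 / m₁)) (w θ) θ) ∧
      ContinuousOn w (Icc 0 1) ∧
      (∀ θ₁ ∈ Icc (0:ℝ) 1, ∀ θ₂ ∈ Icc (0:ℝ) 1,
        |w θ₁ - w θ₂| ≤ ((m₁ - 1) * κ₂ + μ * m₁) / m₁ ^ 2 * ‖y‖ ^ 2 * |θ₁ - θ₂|) := by
  classical
  have hm₁0 : (0:ℝ) < m₁ := lt_of_lt_of_le one_pos hm₁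
  have hm₁ne : m₁ ≠ 0 := ne_of_gt hm₁0
  have h1m₁pos : (0:ℝ) < 1 / m₁ := by positivity
  have h1m₁le : 1 / m₁ ≤ 1 := by
    rw [div_le_one hm₁0]; exact hm₁
  set L : ℝ := ((m₁ - 1) * κ₂ + μ * m₁) / m₁ ^ 2 * ‖y‖ ^ 2 with hLdef
  have hL0 : 0 ≤ L := by
    apply mul_nonneg _ (by positivity)
    apply div_nonneg _ (by positivity)
    have : 0 ≤ m₁ - 1 := by linarith
    nlinarith
  -- the case y = 0
  rcases eq_or_ne y 0 with hy | hy
  · refine ⟨fun _ => 0, ?_, continuousOn_const, ?_⟩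
    · intro θ hθ
      have : (fun θ : ℝ => V (x0 + θ • y) ^ (1 / m₁)) = fun _ => V x0 ^ (1 / m₁) := by
        funext s; rw [hy, smul_zero, add_zero]
      rw [this]
      exact hasDerivAt_const θ _
    · intro θ₁ _ θ₂ _
      simp only [sub_zero, sub_self, abs_zero]
      positivity
  -- setup
  set c : ℝ → EuclideanSpace ℝ (Fin n) := fun θ => x0 + θ • y with hcdef
  set U : Set ℝ := c ⁻¹' D with hUdef
  have hUopen : IsOpen U := hDopen.preimage (by fun_prop)
  have hIccU : Icc (0:ℝ) 1 ⊆ U := fun θ hθ => hseg θ hθ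
  set G : ℝ → ℝ := fun θ => V (c θ) with hGdef
  have hGnonneg : ∀ s ∈ U, 0 ≤ G s := by
    intro s hs
    exact le_trans (by positivity) (hVlow _ hs)
  have hcderiv : ∀ θ : ℝ, HasDerivAt c y θ := by
    intro θ
    have h := ((hasDerivAt_id θ).smul_const y).const_add x0
    simpa [hcdef] using h
  have hVat : ∀ θ ∈ U, ContDiffAt ℝ 2 V (c θ) :=
    fun θ hθ => hV.contDiffAt (hDopen.mem_nhds hθ)
  set φ : ℝ → ℝ := fun θ => fderiv ℝ V (c θ) y with hφdef
  have hGderiv : ∀ θ ∈ U, HasDerivAt G (φ θ) θ := by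
    intro θ hθ
    have hdV : DifferentiableAt ℝ V (c θ) :=
      (hVat θ hθ).differentiableAt (by norm_num)
    exact hdV.hasFDerivAt.comp_hasDerivAt θ (hcderiv θ)
  set ψ : ℝ → ℝ := fun θ => fderiv ℝ (fderiv ℝ V) (c θ) y y with hψdef
  have hφderiv : ∀ θ ∈ U, HasDerivAt φ (ψ θ) θ := by
    intro θ hθ
    have h2 : ContDiffAt ℝ 1 (fderiv ℝ V) (c θ) := by
      apply (hVat θ hθ).fderiv_right
      norm_num
    have hd : DifferentiableAt ℝ (fderiv ℝ V) (c θ) := h2.differentiableAt (by norm_num)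
    have hcomp : HasDerivAt (fun s => fderiv ℝ V (c s)) (fderiv ℝ (fderiv ℝ V) (c θ) y) θ :=
      hd.hasFDerivAt.comp_hasDerivAt θ (hcderiv θ)
    have := hcomp.clm_apply (hasDerivAt_const θ y)
    simpa using this
  -- gradient bound on φ
  have hφabs : ∀ θ, |φ θ| ≤ ‖gradient V (c θ)‖ * ‖y‖ := by
    intro θ
    have h : φ θ = (inner ℝ (gradient V (c θ)) y : ℝ) := by
      rw [hφdef]; rw [gradient, InnerProductSpace.toDual_symm_apply]
    rw [h]
    exact abs_real_inner_le_norm _ _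
  have hφsq : ∀ θ ∈ U, φ θ * φ θ ≤ κ₂ * G θ ^ (2 - 1/m₁) * ‖y‖ ^ 2 := by
    intro θ hθ
    have h1 := hφabs θ
    have h2 := hgradup _ hθ
    have h3 : 0 ≤ |φ θ| := abs_nonneg _
    have h4 : 0 ≤ ‖gradient V (c θ)‖ := norm_nonneg _
    have h5 : 0 ≤ ‖y‖ := norm_nonneg _
    nlinarith [abs_mul_abs_self (φ θ)]
  -- Hessian bound on ψ
  have hψb : ∀ θ ∈ U, |ψ θ| ≤ μ * G θ ^ (1 - 1/m₁) * ‖y‖ ^ 2 := by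
    intro θ hθ
    have h := iteratedFDeriv_two_apply (𝕜 := ℝ) V (c θ) ![y, y]
    simp only [Matrix.cons_val_zero, Matrix.cons_val_one, Matrix.head_cons] at h
    have hb : |ψ θ| ≤ ‖iteratedFDeriv ℝ 2 V (c θ)‖ * ‖y‖ ^ 2 := by
      rw [hψdef]
      simp only
      rw [← Real.norm_eq_abs, ← h]
      calc ‖iteratedFDeriv ℝ 2 V (c θ) ![y, y]‖
          ≤ ‖iteratedFDeriv ℝ 2 V (c θ)‖ * ∏ i, ‖![y,y] i‖ :=
            (iteratedFDeriv ℝ 2 V (c θ)).le_opNorm _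
        _ = ‖iteratedFDeriv ℝ 2 V (c θ)‖ * ‖y‖ ^ 2 := by
            rw [Fin.prod_univ_two]
            simp [sq]
    have heq : iteratedFDeriv ℝ 2 V (c θ) = iteratedFDerivWithin ℝ 2 V D (c θ) :=
      (iteratedFDerivWithin_of_isOpen 2 hDopen hθ).symm
    rw [heq] at hb
    calc |ψ θ| ≤ ‖iteratedFDerivWithin ℝ 2 V D (c θ)‖ * ‖y‖ ^ 2 := hb
      _ ≤ (μ * G θ ^ (1 - 1/m₁)) * ‖y‖ ^ 2 := by
          apply mul_le_mul_of_nonneg_right (hHess _ hθ) (by positivity)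
      _ = μ * G θ ^ (1 - 1/m₁) * ‖y‖ ^ 2 := by ring
  -- zero characterization
  have hGzero : ∀ θ ∈ U, G θ = 0 → c θ = xstar := by
    intro θ hθ h0
    have h1 := hVlow _ hθ
    rw [hGdef] at h0
    simp only at h0
    rw [h0] at h1
    have h2 : ‖c θ - xstar‖ ^ (2*m₁) = 0 := by
      have h3 : 0 ≤ ‖c θ - xstar‖ ^ (2*m₁) := by positivity
      nlinarith
    have h4 : ‖c θ - xstar‖ = 0 := by
      rcases (Real.rpow_eq_zero (norm_nonneg _) (by positivity)).mp h2 with h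
      exact h
    rw [norm_eq_zero, sub_eq_zero] at h4
    exact h4
  have hzeroG : ∀ θ ∈ U, c θ = xstar → G θ = 0 := by
    intro θ hθ h0
    have h1 := hVup _ hθ
    have h2 := hGnonneg θ hθ
    rw [h0] at h1
    simp only [sub_self, norm_zero] at h1
    rw [Real.zero_rpow (by positivity : 2*m₁ ≠ 0), mul_zero] at h1
    have h3 : G θ ≤ 0 := by rw [hGdef]; simp only; rw [h0]; exact h1
    exact le_antisymm h3 h2
  have huniq : ∀ s ∈ U, ∀ t ∈ U, G s = 0 → G t = 0 → s = t := by
    intro s hs t ht h0s h0t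
    have h1 := hGzero s hs h0s
    have h2 := hGzero t ht h0t
    rw [← h2] at h1
    rw [hcdef] at h1
    simp only [add_right_inj] at h1
    have : (s - t) • y = 0 := by
      rw [sub_smul, h1, sub_self]
    rcases smul_eq_zero.mp this with h | h
    · linarith [sub_eq_zero.mp (by exact_mod_cast h)]
    · exact absurd h hy
  -- definition of w
  set w : ℝ → ℝ := fun θ => if G θ = 0 then 0 else 1/m₁ * G θ ^ (1/m₁ - 1) * φ θ with hwdef
  -- bound |w| ≤ C G^{1/(2m₁)}
  have hwb : ∀ s ∈ U, |w s| ≤ Real.sqrt κ₂ / m₁ * ‖y‖ * G s ^ (1/(2*m₁)) := by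
    intro s hs
    by_cases h0 : G s = 0
    · rw [hwdef]; simp only [h0, if_pos]
      rw [abs_zero]
      positivity
    · have hGpos : 0 < G s := lt_of_le_of_ne (hGnonneg s hs) (Ne.symm h0)
      have hφb : |φ s| ≤ Real.sqrt κ₂ * G s ^ (1 - 1/(2*m₁)) * ‖y‖ := by
        have h1 : |φ s| = Real.sqrt (φ s * φ s) := (Real.sqrt_mul_self_eq_abs _).symm
        rw [h1]
        calc Real.sqrt (φ s * φ s) ≤ Real.sqrt (κ₂ * G s ^ (2 - 1/m₁) * ‖y‖^2) :=
              Real.sqrt_le_sqrt (hφsq s hs)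
          _ = Real.sqrt κ₂ * G s ^ (1 - 1/(2*m₁)) * ‖y‖ := by
              rw [Real.sqrt_mul (by positivity), Real.sqrt_mul hκ₂.le,
                Real.sqrt_sq (norm_nonneg y)]
              congr 1
              congr 1
              rw [Real.sqrt_eq_rpow, ← Real.rpow_mul hGpos.le]
              congr 1
              field_simp
              try ring_nf
              try exact Or.inl trivial
      rw [hwdef]
      simp only [if_neg h0]
      have hmul : G s ^ (1/m₁ - 1) * G s ^ (1 - 1/(2*m₁)) = G s ^ (1/(2*m₁)) := by
        rw [← Real.rpow_add hGpos]
        congr 1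
        field_simp
        ring
      calc |1/m₁ * G s ^ (1/m₁ - 1) * φ s|
          = 1/m₁ * G s ^ (1/m₁ - 1) * |φ s| := by
            rw [abs_mul, abs_mul, abs_of_pos h1m₁pos,
              abs_of_nonneg (Real.rpow_nonneg hGpos.le _)]
        _ ≤ 1/m₁ * G s ^ (1/m₁ - 1) * (Real.sqrt κ₂ * G s ^ (1 - 1/(2*m₁)) * ‖y‖) := by
            apply mul_le_mul_of_nonneg_left hφb (by positivity)
        _ = Real.sqrt κ₂ / m₁ * ‖y‖ * (G s ^ (1/m₁ - 1) * G s ^ (1 - 1/(2*m₁))) := by ring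
        _ = Real.sqrt κ₂ / m₁ * ‖y‖ * G s ^ (1/(2*m₁)) := by rw [hmul]
  -- derivative of w and bound where G ≠ 0
  have hA : ∀ θ ∈ U, G θ ≠ 0 → ∃ d, HasDerivAt w d θ ∧ |d| ≤ L := by
    intro θ hθ h0
    have hGpos : 0 < G θ := lt_of_le_of_ne (hGnonneg θ hθ) (Ne.symm h0)
    have h1 : HasDerivAt (fun s => G s ^ (1/m₁ - 1))
        (φ θ * (1/m₁ - 1) * G θ ^ (1/m₁ - 1 - 1)) θ :=
      (hGderiv θ hθ).rpow_const (Or.inl h0)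
    have h2 : HasDerivAt (fun s => 1/m₁ * G s ^ (1/m₁ - 1))
        (1/m₁ * (φ θ * (1/m₁ - 1) * G θ ^ (1/m₁ - 1 - 1))) θ := h1.const_mul _
    have h3 : HasDerivAt (fun s => 1/m₁ * G s ^ (1/m₁ - 1) * φ s)
        (1/m₁ * (φ θ * (1/m₁ - 1) * G θ ^ (1/m₁ - 1 - 1)) * φ θ
          + 1/m₁ * G θ ^ (1/m₁ - 1) * ψ θ) θ :=
      h2.mul (hφderiv θ hθ)
    have hGcont : ContinuousOn G U := fun s hs => (hGderiv s hs).continuousAt.continuousWithinAt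
    have hOopen : IsOpen (U ∩ G ⁻¹' ({0}ᶜ)) :=
      hGcont.isOpen_inter_preimage hUopen isOpen_compl_singleton
    have hweq : w =ᶠ[nhds θ] (fun s => 1/m₁ * G s ^ (1/m₁ - 1) * φ s) := by
      filter_upwards [hOopen.mem_nhds ⟨hθ, h0⟩] with s hs
      rw [hwdef]
      simp only [if_neg (show G s ≠ 0 from hs.2)]
    refine ⟨_, h3.congr_of_eventuallyEq hweq, ?_⟩
    have hT1 : |(1/m₁ - 1) * G θ ^ (1/m₁ - 1 - 1) * (φ θ * φ θ)|
        ≤ (1 - 1/m₁) * (G θ ^ (1/m₁ - 1 - 1) * (κ₂ * G θ ^ (2 - 1/m₁) * ‖y‖^2)) := by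
      rw [abs_mul, abs_mul, abs_of_nonpos (by linarith : 1/m₁ - 1 ≤ 0),
        abs_of_nonneg (Real.rpow_nonneg hGpos.le _), abs_of_nonneg (mul_self_nonneg _), neg_sub,
        mul_assoc]
      apply mul_le_mul_of_nonneg_left _ (by linarith)
      apply mul_le_mul_of_nonneg_left (hφsq θ hθ) (Real.rpow_nonneg hGpos.le _)
    have hT2 : |G θ ^ (1/m₁ - 1) * ψ θ| ≤ G θ ^ (1/m₁ - 1) * (μ * G θ ^ (1 - 1/m₁) * ‖y‖^2) := by
      rw [abs_mul, abs_of_nonneg (Real.rpow_nonneg hGpos.le _)]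
      apply mul_le_mul_of_nonneg_left (hψb θ hθ) (Real.rpow_nonneg hGpos.le _)
    have hp1 : G θ ^ (1/m₁ - 1 - 1) * (κ₂ * G θ ^ (2 - 1/m₁) * ‖y‖^2) = κ₂ * ‖y‖^2 := by
      rw [show G θ ^ (1/m₁ - 1 - 1) * (κ₂ * G θ ^ (2 - 1/m₁) * ‖y‖^2)
          = κ₂ * ‖y‖^2 * (G θ ^ (1/m₁ - 1 - 1) * G θ ^ (2 - 1/m₁)) by ring,
        ← Real.rpow_add hGpos, show (1/m₁ - 1 - 1) + (2 - 1/m₁) = 0 by ring,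
        Real.rpow_zero, mul_one]
    have hp2 : G θ ^ (1/m₁ - 1) * (μ * G θ ^ (1 - 1/m₁) * ‖y‖^2) = μ * ‖y‖^2 := by
      rw [show G θ ^ (1/m₁ - 1) * (μ * G θ ^ (1 - 1/m₁) * ‖y‖^2)
          = μ * ‖y‖^2 * (G θ ^ (1/m₁ - 1) * G θ ^ (1 - 1/m₁)) by ring,
        ← Real.rpow_add hGpos, show (1/m₁ - 1) + (1 - 1/m₁) = 0 by ring,
        Real.rpow_zero, mul_one]
    calc |1/m₁ * (φ θ * (1/m₁ - 1) * G θ ^ (1/m₁ - 1 - 1)) * φ θ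
          + 1/m₁ * G θ ^ (1/m₁ - 1) * ψ θ|
        = 1/m₁ * |(1/m₁ - 1) * G θ ^ (1/m₁ - 1 - 1) * (φ θ * φ θ)
            + G θ ^ (1/m₁ - 1) * ψ θ| := by
          rw [show 1/m₁ * (φ θ * (1/m₁ - 1) * G θ ^ (1/m₁ - 1 - 1)) * φ θ
              + 1/m₁ * G θ ^ (1/m₁ - 1) * ψ θ
              = 1/m₁ * ((1/m₁ - 1) * G θ ^ (1/m₁ - 1 - 1) * (φ θ * φ θ)
                + G θ ^ (1/m₁ - 1) * ψ θ) by ring,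
            abs_mul, abs_of_pos h1m₁pos]
      _ ≤ 1/m₁ * (|(1/m₁ - 1) * G θ ^ (1/m₁ - 1 - 1) * (φ θ * φ θ)|
            + |G θ ^ (1/m₁ - 1) * ψ θ|) :=
          mul_le_mul_of_nonneg_left (abs_add_le _ _) h1m₁pos.le
      _ ≤ 1/m₁ * ((1 - 1/m₁) * (κ₂ * ‖y‖^2) + μ * ‖y‖^2) := by
          apply mul_le_mul_of_nonneg_left _ h1m₁pos.le
          have t1 := hT1
          rw [hp1] at t1
          have t2 := hT2
          rw [hp2] at t2
          exact add_le_add t1 t2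
      _ = L := by rw [hLdef]; field_simp
  -- Lipschitz estimate on subintervals where G ≠ 0
  have hC1 : ∀ a b : ℝ, a ∈ Icc (0:ℝ) 1 → b ∈ Icc (0:ℝ) 1 → a ≤ b →
      (∀ t ∈ Icc a b, G t ≠ 0) → |w b - w a| ≤ L * (b - a) := by
    intro a b ha hb hab hne
    have hsub : Icc a b ⊆ Icc (0:ℝ) 1 := Icc_subset_Icc ha.1 hb.2
    choose d hd hdL using fun t (ht : t ∈ Icc a b) => hA t (hIccU (hsub ht)) (hne t ht)
    have key := Convex.norm_image_sub_le_of_norm_hasDerivWithin_le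
      (f := w) (f' := fun t => if ht : t ∈ Icc a b then d t ht else 0)
      (C := L) ?_ ?_ (convex_Icc a b) (left_mem_Icc.mpr hab) (right_mem_Icc.mpr hab)
    · rw [Real.norm_eq_abs, Real.norm_eq_abs, abs_of_nonneg (by linarith : (0:ℝ) ≤ b - a)] at key
      exact key
    · intro t ht
      simp only [dif_pos ht]
      exact (hd t ht).hasDerivWithinAt
    · intro t ht
      simp only [dif_pos ht, Real.norm_eq_abs]
      exact hdL t ht
  -- estimate near a zero of G
  have hC3 : ∀ θs ∈ Icc (0:ℝ) 1, G θs = 0 → ∀ t ∈ Icc (0:ℝ) 1, |w t| ≤ L * |t - θs| := by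
    intro θs hθs h0 t ht
    have hwθs : w θs = 0 := by rw [hwdef]; simp only [if_pos h0]
    rcases lt_trichotomy t θs with hlt | heq | hgt
    · -- t < θs
      have hkey : ∀ s ∈ Ico t θs, |w t - w s| ≤ L * (θs - t) := by
        intro s hs
        have hsIcc : s ∈ Icc (0:ℝ) 1 := ⟨le_trans ht.1 hs.1, le_trans hs.2.le hθs.2⟩
        have h1 : |w s - w t| ≤ L * (s - t) := by
          apply hC1 t s ht hsIcc hs.1
          intro u hu hu0
          have huIcc : u ∈ Icc (0:ℝ) 1 := ⟨le_trans ht.1 hu.1, le_trans hu.2 hsIcc.2⟩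
          have hueq := huniq u (hIccU huIcc) θs (hIccU hθs) hu0 h0
          have hult : u < θs := lt_of_le_of_lt hu.2 hs.2
          exact absurd hueq (ne_of_lt hult)
        calc |w t - w s| = |w s - w t| := abs_sub_comm _ _
          _ ≤ L * (s - t) := h1
          _ ≤ L * (θs - t) := mul_le_mul_of_nonneg_left (by linarith [hs.2]) hL0
      have hmem : θs ∈ closure (Ico t θs) := by
        rw [closure_Ico (ne_of_lt hlt)]
        exact ⟨hlt.le, le_rfl⟩
      have hnebot : (nhdsWithin θs (Ico t θs)).NeBot :=
        mem_closure_iff_nhdsWithin_neBot.mp hmem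
      have hGt : Filter.Tendsto G (nhdsWithin θs (Ico t θs)) (nhds 0) := by
        have hc : ContinuousAt G θs := (hGderiv θs (hIccU hθs)).continuousAt
        have h2 : Filter.Tendsto G (nhdsWithin θs (Ico t θs)) (nhds (G θs)) :=
          hc.tendsto.mono_left nhdsWithin_le_nhds
        rwa [h0] at h2
      have hgten : Filter.Tendsto (fun s => Real.sqrt κ₂ / m₁ * ‖y‖ * G s ^ (1/(2*m₁)))
          (nhdsWithin θs (Ico t θs)) (nhds 0) := by
        have h1 : Filter.Tendsto (fun s => G s ^ (1/(2*m₁)))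
            (nhdsWithin θs (Ico t θs)) (nhds 0) := by
          have hc : ContinuousAt (fun u : ℝ => u ^ (1/(2*m₁))) 0 :=
            Real.continuousAt_rpow_const 0 _ (Or.inr (by positivity))
          have h3 := hc.tendsto.comp hGt
          rwa [Real.zero_rpow (by positivity : 1/(2*m₁) ≠ 0)] at h3
        have h4 := h1.const_mul (Real.sqrt κ₂ / m₁ * ‖y‖)
        rwa [mul_zero] at h4
      have hwt : Filter.Tendsto w (nhdsWithin θs (Ico t θs)) (nhds 0) := by
        apply squeeze_zero_norm' ?_ hgten
        filter_upwards [self_mem_nhdsWithin] with s hs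
        have hsIcc : s ∈ Icc (0:ℝ) 1 := mem_Icc.mpr ⟨le_trans ht.1 hs.1, le_trans hs.2.le hθs.2⟩
        rw [Real.norm_eq_abs]
        exact hwb s (hIccU hsIcc)
      have hfin : Filter.Tendsto (fun s => |w t - w s|)
          (nhdsWithin θs (Ico t θs)) (nhds |w t - 0|) :=
        (Filter.Tendsto.sub tendsto_const_nhds hwt).abs
      have hle : |w t - 0| ≤ L * (θs - t) := by
        apply le_of_tendsto hfin
        filter_upwards [self_mem_nhdsWithin] with s hs
        exact hkey s hs
      rw [sub_zero] at hle
      rw [abs_sub_comm, abs_of_nonneg (by linarith : (0:ℝ) ≤ θs - t)]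
      exact hle
    · rw [heq, hwθs, abs_zero]
      exact mul_nonneg hL0 (abs_nonneg _)
    · -- θs < t
      have hkey : ∀ s ∈ Ioc θs t, |w t - w s| ≤ L * (t - θs) := by
        intro s hs
        have hsIcc : s ∈ Icc (0:ℝ) 1 := ⟨le_trans hθs.1 hs.1.le, le_trans hs.2 ht.2⟩
        have h1 : |w t - w s| ≤ L * (t - s) := by
          apply hC1 s t hsIcc ht hs.2
          intro u hu hu0
          have huIcc : u ∈ Icc (0:ℝ) 1 := ⟨le_trans hsIcc.1 hu.1, le_trans hu.2 ht.2⟩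
          have hueq := huniq u (hIccU huIcc) θs (hIccU hθs) hu0 h0
          have hult : θs < u := lt_of_lt_of_le hs.1 hu.1
          exact absurd hueq (ne_of_gt hult)
        calc |w t - w s| ≤ L * (t - s) := h1
          _ ≤ L * (t - θs) := mul_le_mul_of_nonneg_left (by linarith [hs.1]) hL0
      have hmem : θs ∈ closure (Ioc θs t) := by
        rw [closure_Ioc (ne_of_lt hgt)]
        exact ⟨le_rfl, hgt.le⟩
      have hnebot : (nhdsWithin θs (Ioc θs t)).NeBot :=
        mem_closure_iff_nhdsWithin_neBot.mp hmem
      have hGt : Filter.Tendsto G (nhdsWithin θs (Ioc θs t)) (nhds 0) := by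
        have hc : ContinuousAt G θs := (hGderiv θs (hIccU hθs)).continuousAt
        have h2 : Filter.Tendsto G (nhdsWithin θs (Ioc θs t)) (nhds (G θs)) :=
          hc.tendsto.mono_left nhdsWithin_le_nhds
        rwa [h0] at h2
      have hgten : Filter.Tendsto (fun s => Real.sqrt κ₂ / m₁ * ‖y‖ * G s ^ (1/(2*m₁)))
          (nhdsWithin θs (Ioc θs t)) (nhds 0) := by
        have h1 : Filter.Tendsto (fun s => G s ^ (1/(2*m₁)))
            (nhdsWithin θs (Ioc θs t)) (nhds 0) := by
          have hc : ContinuousAt (fun u : ℝ => u ^ (1/(2*m₁))) 0 :=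
            Real.continuousAt_rpow_const 0 _ (Or.inr (by positivity))
          have h3 := hc.tendsto.comp hGt
          rwa [Real.zero_rpow (by positivity : 1/(2*m₁) ≠ 0)] at h3
        have h4 := h1.const_mul (Real.sqrt κ₂ / m₁ * ‖y‖)
        rwa [mul_zero] at h4
      have hwt : Filter.Tendsto w (nhdsWithin θs (Ioc θs t)) (nhds 0) := by
        apply squeeze_zero_norm' ?_ hgten
        filter_upwards [self_mem_nhdsWithin] with s hs
        have hsIcc : s ∈ Icc (0:ℝ) 1 := mem_Icc.mpr ⟨le_trans hθs.1 hs.1.le, le_trans hs.2 ht.2⟩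
        rw [Real.norm_eq_abs]
        exact hwb s (hIccU hsIcc)
      have hfin : Filter.Tendsto (fun s => |w t - w s|)
          (nhdsWithin θs (Ioc θs t)) (nhds |w t - 0|) :=
        (Filter.Tendsto.sub tendsto_const_nhds hwt).abs
      have hle : |w t - 0| ≤ L * (t - θs) := by
        apply le_of_tendsto hfin
        filter_upwards [self_mem_nhdsWithin] with s hs
        exact hkey s hs
      rw [sub_zero] at hle
      rw [abs_of_nonneg (by linarith : (0:ℝ) ≤ t - θs)]
      exact hle
  -- full Lipschitz estimate
  have hLipFull : ∀ θ₁ ∈ Icc (0:ℝ) 1, ∀ θ₂ ∈ Icc (0:ℝ) 1,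
      |w θ₁ - w θ₂| ≤ L * |θ₁ - θ₂| := by
    have hLip : ∀ θ₁ ∈ Icc (0:ℝ) 1, ∀ θ₂ ∈ Icc (0:ℝ) 1, θ₁ ≤ θ₂ →
        |w θ₁ - w θ₂| ≤ L * (θ₂ - θ₁) := by
      intro θ₁ h₁ θ₂ h₂ h12
      by_cases hz : ∃ θs ∈ Icc θ₁ θ₂, G θs = 0
      · obtain ⟨θs, hθsm, h0⟩ := hz
        have hθs' : θs ∈ Icc (0:ℝ) 1 := Icc_subset_Icc h₁.1 h₂.2 hθsm
        have b1 := hC3 θs hθs' h0 θ₁ h₁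
        have b2 := hC3 θs hθs' h0 θ₂ h₂
        rw [abs_sub_comm, abs_of_nonneg (by linarith [hθsm.1] : (0:ℝ) ≤ θs - θ₁)] at b1
        rw [abs_of_nonneg (by linarith [hθsm.2] : (0:ℝ) ≤ θ₂ - θs)] at b2
        calc |w θ₁ - w θ₂| ≤ |w θ₁| + |w θ₂| := abs_sub _ _
          _ ≤ L * (θs - θ₁) + L * (θ₂ - θs) := add_le_add b1 b2
          _ = L * (θ₂ - θ₁) := by ring
      · push_neg at hz
        have := hC1 θ₁ θ₂ h₁ h₂ h12 hz
        rwa [abs_sub_comm] at this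
    intro θ₁ h₁ θ₂ h₂
    rcases le_total θ₁ θ₂ with h | h
    · rw [abs_sub_comm θ₁ θ₂, abs_of_nonneg (sub_nonneg.mpr h)]
      exact hLip θ₁ h₁ θ₂ h₂ h
    · rw [abs_of_nonneg (sub_nonneg.mpr h)]
      have := hLip θ₂ h₂ θ₁ h₁ h
      rwa [abs_sub_comm] at this
  -- assemble
  refine ⟨w, ?_, ?_, fun θ₁ h₁ θ₂ h₂ => hLipFull θ₁ h₁ θ₂ h₂⟩
  · intro θ hθ
    show HasDerivAt (fun s : ℝ => G s ^ (1/m₁)) (w θ) θ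
    by_cases h0 : G θ = 0
    · have hwθ : w θ = 0 := by rw [hwdef]; simp only [if_pos h0]
      rw [hwθ, hasDerivAt_iff_isLittleO]
      simp only [smul_zero, sub_zero, h0, Real.zero_rpow (ne_of_gt h1m₁pos)]
      have hbig : (fun s => G s ^ (1/m₁)) =O[nhds θ] (fun s => (s - θ)^2) := by
        rw [Asymptotics.isBigO_iff]
        refine ⟨γ₂ ^ (1/m₁) * ‖y‖^2, ?_⟩
        filter_upwards [hUopen.mem_nhds (hIccU hθ)] with s hs
        have h1 : G s ≤ γ₂ * ‖c s - xstar‖ ^ (2*m₁) := hVup _ hs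
        have hcθ : c θ = xstar := hGzero θ (hIccU hθ) h0
        have h2 : c s - xstar = (s - θ) • y := by
          rw [← hcθ, hcdef]
          simp only
          rw [sub_smul]
          abel
        have hGs : 0 ≤ G s := hGnonneg s hs
        have key : G s ^ (1/m₁) ≤ γ₂ ^ (1/m₁) * ‖y‖^2 * (s - θ)^2 := by
          calc G s ^ (1/m₁) ≤ (γ₂ * (|s - θ| * ‖y‖) ^ (2*m₁)) ^ (1/m₁) := by
                apply Real.rpow_le_rpow hGs _ (le_of_lt h1m₁pos)
                rw [show |s - θ| * ‖y‖ = ‖c s - xstar‖ by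
                  rw [h2, norm_smul, Real.norm_eq_abs]]
                exact h1
            _ = γ₂ ^ (1/m₁) * ((|s - θ| * ‖y‖) ^ (2*m₁)) ^ (1/m₁) :=
                Real.mul_rpow hγ₂.le (by positivity)
            _ = γ₂ ^ (1/m₁) * (|s - θ| * ‖y‖) ^ ((2*m₁) * (1/m₁)) := by
                rw [← Real.rpow_mul (by positivity)]
            _ = γ₂ ^ (1/m₁) * (|s - θ| * ‖y‖) ^ (2:ℝ) := by
                rw [show (2*m₁) * (1/m₁) = 2 by field_simp]
            _ = γ₂ ^ (1/m₁) * ‖y‖^2 * (s - θ)^2 := by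
                rw [show ((2:ℝ)) = ((2:ℕ):ℝ) by norm_num, Real.rpow_natCast,
                  mul_pow, sq_abs]
                ring
        rw [Real.norm_eq_abs, Real.norm_eq_abs, abs_of_nonneg (Real.rpow_nonneg hGs _),
          abs_of_nonneg (sq_nonneg _)]
        exact key
      have hsmall : (fun s : ℝ => (s - θ)^2) =o[nhds θ] (fun s => s - θ) := by
        have h1 : (fun s : ℝ => s - θ) =o[nhds θ] (fun _ => (1:ℝ)) := by
          rw [Asymptotics.isLittleO_one_iff]
          have h2 := Continuous.tendsto (show Continuous (fun s : ℝ => s - θ) by fun_prop) θ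
          simpa using h2
        have := h1.mul_isBigO (Asymptotics.isBigO_refl (fun s : ℝ => s - θ) (nhds θ))
        simpa [sq] using this
      exact hbig.trans_isLittleO hsmall
    · have h := (hGderiv θ (hIccU hθ)).rpow_const (p := 1/m₁) (Or.inl h0)
      have hwθ : w θ = φ θ * (1/m₁) * G θ ^ (1/m₁ - 1) := by
        rw [hwdef]
        simp only [if_neg h0]
        ring
      rw [hwθ]
      exact h
  · have hlip : LipschitzOnWith (Real.toNNReal L) w (Icc 0 1) := by
      rw [lipschitzOnWith_iff_dist_le_mul]
      intro p hp q hq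
      rw [Real.dist_eq, Real.dist_eq]
      calc |w p - w q| ≤ L * |p - q| := hLipFull p hp q hq
        _ ≤ (Real.toNNReal L : ℝ) * |p - q| :=
            mul_le_mul_of_nonneg_right (Real.le_coe_toNNReal L) (abs_nonneg _)
    exact hlip.continuousOn
end

section
/- Let J₀ > 0, λ > 0, ε > 0, m̃ > 0, and suppose a sequence (Jₙ) of nonnegative reals satisfies J_{n+1} ≤ Jₙ·(1 + m̃·ε·λ·Jₙ^{m̃})^{-1/m̃} with J₀ given. Then for all n ∈ ℕ, Jₙ ≤ J₀·(1 + n·ε·λ·m̃·J₀^{m̃})^{-1/m̃}. -/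
lemma aux_mono (c mt : ℝ) (hc : 0 < c) (hmt : 0 < mt) {x y : ℝ}
    (hx : 0 ≤ x) (hxy : x ≤ y) :
    x * (1 + c * x ^ mt) ^ (-(1/mt)) ≤ y * (1 + c * y ^ mt) ^ (-(1/mt)) := by
  have hy : 0 ≤ y := hx.trans hxy
  have huv : x ^ mt ≤ y ^ mt := Real.rpow_le_rpow hx hxy hmt.le
  have hu : 0 ≤ x ^ mt := Real.rpow_nonneg hx _
  have hdu : (0:ℝ) < 1 + c * x ^ mt := by positivity
  have hdv : (0:ℝ) < 1 + c * y ^ mt := by positivity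
  have hB : 0 ≤ y * (1 + c * y ^ mt) ^ (-(1/mt)) := by positivity
  by_contra h
  push_neg at h
  have hpow : (y * (1 + c * y ^ mt) ^ (-(1/mt))) ^ mt
      < (x * (1 + c * x ^ mt) ^ (-(1/mt))) ^ mt :=
    Real.rpow_lt_rpow hB h hmt
  rw [Real.mul_rpow hy (by positivity), Real.mul_rpow hx (by positivity),
    ← Real.rpow_mul hdu.le, ← Real.rpow_mul hdv.le,
    show (-(1/mt)) * mt = -1 by field_simp, Real.rpow_neg_one, Real.rpow_neg_one,
    ← div_eq_mul_inv, ← div_eq_mul_inv, div_lt_div_iff₀ hdv hdu] at hpow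
  nlinarith

lemma aux_eq (c mt J0 D : ℝ) (hc : 0 < c) (hmt : 0 < mt) (hJ0 : 0 < J0) (hD : 0 < D) :
    (J0 * D ^ (-(1/mt))) * (1 + c * (J0 * D ^ (-(1/mt))) ^ mt) ^ (-(1/mt))
      = J0 * (D + c * J0 ^ mt) ^ (-(1/mt)) := by
  have h1 : (J0 * D ^ (-(1/mt))) ^ mt = J0 ^ mt * D⁻¹ := by
    rw [Real.mul_rpow hJ0.le (by positivity), ← Real.rpow_mul hD.le,
      show (-(1/mt)) * mt = -1 by field_simp, Real.rpow_neg_one]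
  rw [h1]
  have h2 : 1 + c * (J0 ^ mt * D⁻¹) = (D + c * J0 ^ mt) / D := by
    field_simp
  rw [h2, Real.div_rpow (by positivity) hD.le]
  have hDne : D ^ (-(1/mt)) ≠ 0 := by positivity
  field_simp

/-- if a nonnegative sequence satisfies
`J_{n+1} ≤ Jₙ (1 + m̃ ε λ Jₙ^{m̃})^{-1/m̃}` with `J₀ > 0`, then
`Jₙ ≤ J₀ (1 + n ε λ m̃ J₀^{m̃})^{-1/m̃}` for all `n`. -/
theorem stmt15 (J : ℕ → ℝ) (ε lam mt : ℝ)
    (hε : 0 < ε) (hlam : 0 < lam) (hmt : 0 < mt)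
    (hJ0 : 0 < J 0) (hJpos : ∀ n, 0 ≤ J n)
    (hrec : ∀ n, J (n + 1) ≤ J n * (1 + mt * ε * lam * J n ^ mt) ^ (-(1 / mt))) :
    ∀ n : ℕ, J n ≤ J 0 * (1 + n * ε * lam * mt * J 0 ^ mt) ^ (-(1 / mt)) := by
  intro n
  induction n with
  | zero => simp
  | succ n ih =>
    have hcpos : 0 < mt * ε * lam := by positivity
    have hDpos : (0:ℝ) < 1 + (n:ℝ) * ε * lam * mt * J 0 ^ mt := by positivity
    calc J (n+1) ≤ J n * (1 + mt * ε * lam * J n ^ mt) ^ (-(1/mt)) := hrec n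
      _ ≤ (J 0 * (1 + (n:ℝ)*ε*lam*mt*J 0^mt)^(-(1/mt)))
          * (1 + mt*ε*lam * (J 0 * (1 + (n:ℝ)*ε*lam*mt*J 0^mt)^(-(1/mt)))^mt)^(-(1/mt)) :=
            aux_mono _ mt hcpos hmt (hJpos n) ih
      _ = J 0 * ((1 + (n:ℝ)*ε*lam*mt*J 0^mt) + mt*ε*lam * J 0 ^ mt)^(-(1/mt)) :=
            aux_eq _ mt _ _ hcpos hmt hJ0 hDpos
      _ = J 0 * (1 + ((n:ℕ)+1:ℕ) * ε * lam * mt * J 0 ^ mt) ^ (-(1/mt)) := by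
            congr 2
            push_cast
            ring
end
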